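/- arXiv:1904.07440 — 3 statements merged into one kernel-verified Lean document; each statement's English description precedes it below -/
import Mathlib

section
/- If s = -α g where α = 2/(γ + √(γ² + 4σ‖g‖)), γ ≥ 0, σ > 0, then ‖s‖ ≤ √(‖g‖/σ). -/
theorem step_norm_bound (n : ℕ) (g : EuclideanSpace ℝ (Fin n)) (γ σ : ℝ)
    (hγ : γ ≥ 0) (hσ : σ > 0)
    (s : EuclideanSpace ℝ (Fin n))
    (hs : s = -((2 / (γ + Real.sqrt (γ ^ 2 + 4 * σ * ‖g‖))) • g)) :
    ‖s‖ ≤ Real.sqrt (‖g‖ / σ) := by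
  set r := ‖g‖ with hr
  have hr0 : 0 ≤ r := norm_nonneg g
  have hsq : 0 ≤ γ ^ 2 + 4 * σ * r := by positivity
  have hDnn : 0 ≤ γ + Real.sqrt (γ ^ 2 + 4 * σ * r) := by
    have := Real.sqrt_nonneg (γ ^ 2 + 4 * σ * r); linarith
  have hnorm : ‖s‖ = (2 / (γ + Real.sqrt (γ ^ 2 + 4 * σ * r))) * r := by
    rw [hs, norm_neg, norm_smul, Real.norm_eq_abs, abs_of_nonneg (by positivity)]
  rw [hnorm]
  rcases eq_or_lt_of_le hr0 with h0 | hrpos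
  · rw [← h0]; simp [Real.sqrt_nonneg]
  · have hσr : 0 < σ * r := mul_pos hσ hrpos
    have h2 : Real.sqrt (4 * σ * r) = 2 * Real.sqrt (σ * r) := by
      rw [show (4:ℝ) * σ * r = 2^2 * (σ * r) by ring, Real.sqrt_mul (by positivity),
        Real.sqrt_sq (by norm_num)]
    have hD : 2 * Real.sqrt (σ * r) ≤ γ + Real.sqrt (γ ^ 2 + 4 * σ * r) := by
      have : Real.sqrt (4 * σ * r) ≤ Real.sqrt (γ ^ 2 + 4 * σ * r) := by
        apply Real.sqrt_le_sqrt; nlinarith [sq_nonneg γ]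
      rw [h2] at this; linarith
    have hsr : 0 < Real.sqrt (σ * r) := Real.sqrt_pos.mpr hσr
    have hDpos : 0 < γ + Real.sqrt (γ ^ 2 + 4 * σ * r) := lt_of_lt_of_le (by linarith) hD
    have key : (2 / (γ + Real.sqrt (γ ^ 2 + 4 * σ * r))) * r ≤ r / Real.sqrt (σ * r) := by
      rw [div_mul_eq_mul_div, div_le_div_iff₀ hDpos hsr]
      nlinarith [mul_le_mul_of_nonneg_left hD hr0]
    refine key.trans ?_
    have hrs : Real.sqrt (r / σ) * Real.sqrt (σ * r) = r := by
      rw [← Real.sqrt_mul (by positivity), show r / σ * (σ * r) = r^2 by field_simp,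
        Real.sqrt_sq hr0]
    rw [div_le_iff₀ hsr, hrs]
end

section
/- For the cubic model m(s) = f₀ + gᵀs + (1/2)γ‖s‖² + (1/3)σ‖s‖³ with minimizer s* = -α g where α = 2/(γ + √(γ² + 4σ‖g‖)), the predicted decrease satisfies f₀ - m(s*) ≥ ‖g‖²/(6(γ + 2√(σ‖g‖))). -/
open scoped RealInnerProductSpace

theorem predicted_decrease (n : ℕ) (f₀ : ℝ) (g : EuclideanSpace ℝ (Fin n)) (hg : g ≠ 0)
    (γ σ : ℝ) (hγ : γ > 0) (hσ : σ > 0)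
    (m : EuclideanSpace ℝ (Fin n) → ℝ)
    (hm : ∀ s, m s = f₀ + ⟪g, s⟫ + (1 / 2) * γ * ‖s‖ ^ 2 + (1 / 3) * σ * ‖s‖ ^ 3)
    (sstar : EuclideanSpace ℝ (Fin n))
    (hsstar : sstar = -((2 / (γ + Real.sqrt (γ ^ 2 + 4 * σ * ‖g‖))) • g)) :
    f₀ - m sstar ≥ ‖g‖ ^ 2 / (6 * (γ + 2 * Real.sqrt (σ * ‖g‖))) := by
  have hGpos : 0 < ‖g‖ := norm_pos_iff.mpr hg
  set G : ℝ := ‖g‖ with hG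
  set D : ℝ := Real.sqrt (γ ^ 2 + 4 * σ * G) with hDdef
  have hDsq : D ^ 2 = γ ^ 2 + 4 * σ * G := Real.sq_sqrt (by positivity)
  have hDpos : 0 < D := Real.sqrt_pos.mpr (by positivity)
  set t : ℝ := Real.sqrt (σ * G) with htdef
  have htsq : t ^ 2 = σ * G := Real.sq_sqrt (by positivity)
  have htpos : 0 < t := Real.sqrt_pos.mpr (by positivity)
  have hDle : D ≤ γ + 2 * t := by nlinarith [hDsq, htsq, hDpos, htpos]
  have hcpos : 0 < γ + D := by linarith
  set α : ℝ := 2 / (γ + D) with hα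
  have hαpos : 0 < α := by positivity
  have hα2 : α * (γ + D) = 2 := by rw [hα]; field_simp
  have hαD : α * D = 2 - α * γ := by linear_combination hα2
  have key : γ * α + σ * α ^ 2 * G = 1 := by
    linear_combination ((α * D + 2 - α * γ) / 4) * hαD - (α ^ 2 / 4) * hDsq
  have hnorm : ‖sstar‖ = α * G := by
    rw [hsstar, norm_neg, norm_smul, Real.norm_eq_abs, abs_of_pos hαpos]
  have hinner : ⟪g, sstar⟫ = -(α * G ^ 2) := by
    rw [hsstar, inner_neg_right, real_inner_smul_right, real_inner_self_eq_norm_sq]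
  rw [hm, hinner, hnorm, ge_iff_le, div_le_iff₀ (by positivity)]
  have e : f₀ - (f₀ + -(α * G ^ 2) + 1 / 2 * γ * (α * G) ^ 2 + 1 / 3 * σ * (α * G) ^ 3)
      = α * G ^ 2 / 2 + σ * α ^ 3 * G ^ 3 / 6 := by
    linear_combination (-(α * G ^ 2) / 2) * key
  have h2 : 1 ≤ 3 * (γ + 2 * t) * α := by
    nlinarith [hα2, mul_le_mul_of_nonneg_left hDle hαpos.le, mul_pos hαpos htpos]
  have hp : 0 ≤ σ * α ^ 3 * G ^ 3 * (γ + 2 * t) := by positivity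
  have h4 : G ^ 2 ≤ (α * G ^ 2 / 2 + σ * α ^ 3 * G ^ 3 / 6) * (6 * (γ + 2 * t)) := by
    nlinarith [mul_le_mul_of_nonneg_right h2 (sq_nonneg G), hp]
  rw [e]
  linarith [h4]
end

section
/- Any global minimizer s of m(s) = f₀ + gᵀs + (1/2)γ‖s‖² + (1/3)σ‖s‖³ with g ≠ 0, γ > 0, σ > 0 satisfies the first-order condition g + γs + σ‖s‖s = 0, and every solution of this equation is parallel to -g, i.e., s = -αg for some α > 0. -/
open scoped RealInnerProductSpace

lemma key_real (a b γ σ l f₀ : ℝ) (ha : 0 < a) (hb : 0 < b) (hγ : 0 < γ) (hσ : 0 < σ)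
    (hl : 0 ≤ l)
    (H : ∀ t, 0 ≤ t → f₀ - a*l + γ*a/2*l^2 + σ*b/3*l^3 ≤ f₀ - a*t + γ*a/2*t^2 + σ*b/3*t^3) :
    γ*a*l + σ*b*l^2 = a := by
  set D : ℝ := -a + γ*a*l + σ*b*l^2 with hD
  set A : ℝ := γ*a/2 + σ*b*l with hA
  set B : ℝ := σ*b/3 with hB
  have hApos : 0 < A := by positivity
  have hBpos : 0 < B := by positivity
  rcases lt_trichotomy D 0 with hd | hd | hd
  · exfalso
    set ε : ℝ := min 1 (-D/(2*(A+B))) with hε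
    have hεpos : 0 < ε := lt_min one_pos (div_pos (by linarith) (by linarith))
    have hε1 : ε ≤ 1 := min_le_left _ _
    have hε2 : ε ≤ -D/(2*(A+B)) := min_le_right _ _
    have hε2' : ε * (2*(A+B)) ≤ -D := by
      rw [← le_div_iff₀ (by linarith : (0:ℝ) < 2*(A+B))]; exact hε2
    have hH := H (l + ε) (by linarith)
    have expand : (f₀ - a*(l+ε) + γ*a/2*(l+ε)^2 + B*(l+ε)^3)
        - (f₀ - a*l + γ*a/2*l^2 + B*l^3) = D*ε + A*ε^2 + B*ε^3 := by
      rw [hD, hA, hB]; ring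
    have h1 : 0 ≤ D*ε + A*ε^2 + B*ε^3 := by rw [← expand]; linarith
    have e3 : B*ε^3 ≤ B*ε^2 :=
      mul_le_mul_of_nonneg_left (pow_le_pow_of_le_one hεpos.le hε1 (by norm_num)) hBpos.le
    have e4 : ε * (ε*(2*(A+B))) ≤ ε * (-D) :=
      mul_le_mul_of_nonneg_left hε2' hεpos.le
    nlinarith [mul_pos hεpos (neg_pos.mpr hd)]
  · linarith
  · exfalso
    have hl0 : 0 < l := by
      rcases hl.lt_or_eq with h | h
      · exact h
      · have : D = -a := by rw [hD, ← h]; ring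
        linarith
    set ε : ℝ := min l (D/(2*A)) with hε
    have hεpos : 0 < ε := lt_min hl0 (div_pos hd (by linarith))
    have hεl : ε ≤ l := min_le_left _ _
    have hε2 : ε ≤ D/(2*A) := min_le_right _ _
    have hε2' : ε * (2*A) ≤ D := by
      rw [← le_div_iff₀ (by linarith : (0:ℝ) < 2*A)]; exact hε2
    have hH := H (l - ε) (by linarith)
    have expand : (f₀ - a*(l-ε) + γ*a/2*(l-ε)^2 + B*(l-ε)^3)
        - (f₀ - a*l + γ*a/2*l^2 + B*l^3) = -(D*ε) + A*ε^2 - B*ε^3 := by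
      rw [hD, hA, hB]; ring
    have h1 : 0 ≤ -(D*ε) + A*ε^2 - B*ε^3 := by rw [← expand]; linarith
    have e3 : 0 ≤ B*ε^3 := by positivity
    have e4 : ε * (ε*(2*A)) ≤ ε * D := mul_le_mul_of_nonneg_left hε2' hεpos.le
    nlinarith [mul_pos hεpos hd]

theorem cubic_model_critical_points (n : ℕ) (g : EuclideanSpace ℝ (Fin n)) (hg : g ≠ 0)
    (γ σ f₀ : ℝ) (hγ : γ > 0) (hσ : σ > 0)
    (m : EuclideanSpace ℝ (Fin n) → ℝ)
    (hm : ∀ s, m s = f₀ + ⟪g, s⟫ + (1 / 2) * γ * ‖s‖ ^ 2 + (1 / 3) * σ * ‖s‖ ^ 3) :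
    (∀ s, (∀ t, m s ≤ m t) → g + γ • s + (σ * ‖s‖) • s = 0) ∧
    (∀ s, g + γ • s + (σ * ‖s‖) • s = 0 → ∃ α : ℝ, α > 0 ∧ s = -(α • g)) := by
  have hgn : (0:ℝ) < ‖g‖ := norm_pos_iff.mpr hg
  constructor
  · intro s hmin
    -- evaluate m along -(t • g) for t ≥ 0
    have hval : ∀ t : ℝ, 0 ≤ t → m (-(t • g)) =
        f₀ - ‖g‖^2*t + γ*‖g‖^2/2*t^2 + σ*‖g‖^3/3*t^3 := by
      intro t ht
      rw [hm]
      have hn : ‖-(t • g)‖ = t*‖g‖ := by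
        rw [norm_neg, norm_smul, Real.norm_eq_abs, abs_of_nonneg ht]
      rw [hn, inner_neg_right, real_inner_smul_right, real_inner_self_eq_norm_sq]
      ring
    -- step A : Cauchy-Schwarz equality
    have h1 : ⟪g, s⟫ ≤ -(‖g‖*‖s‖) := by
      have hu := hmin (-((‖s‖/‖g‖) • g))
      rw [hm s, hval (‖s‖/‖g‖) (by positivity)] at hu
      have hinner : ⟪g,s⟫ + ‖g‖*‖s‖ ≤ 0 := by
        have e1 : ‖g‖^2*(‖s‖/‖g‖) = ‖g‖*‖s‖ := by field_simp
        have e2 : γ*‖g‖^2/2*(‖s‖/‖g‖)^2 = 1/2*γ*‖s‖^2 := by field_simp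
        have e3 : σ*‖g‖^3/3*(‖s‖/‖g‖)^3 = 1/3*σ*‖s‖^3 := by field_simp
        rw [e1, e2, e3] at hu; linarith
      linarith
    have h2 : -(‖g‖*‖s‖) ≤ ⟪g, s⟫ := by
      have := real_inner_le_norm (-g) s
      rw [inner_neg_left, norm_neg] at this
      linarith
    have heq : ⟪-g, s⟫ = ‖-g‖ * ‖s‖ := by
      rw [inner_neg_left, norm_neg]; linarith
    have hpar : ‖s‖ • (-g) = ‖-g‖ • s := inner_eq_norm_mul_iff_real.mp heq
    -- s = -(l • g)
    set l : ℝ := ‖s‖/‖g‖ with hldef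
    have hl : 0 ≤ l := by positivity
    have hs_eq : s = -(l • g) := by
      rw [norm_neg] at hpar
      have : s = (‖g‖)⁻¹ • (‖s‖ • (-g)) := by
        rw [hpar, smul_smul, inv_mul_cancel₀ (ne_of_gt hgn), one_smul]
      rw [this, hldef]
      module
    have hns : ‖s‖ = l * ‖g‖ := by
      rw [hldef]; field_simp
    -- apply the key real lemma
    have H : ∀ t, 0 ≤ t → f₀ - ‖g‖^2*l + γ*‖g‖^2/2*l^2 + σ*‖g‖^3/3*l^3 ≤
        f₀ - ‖g‖^2*t + γ*‖g‖^2/2*t^2 + σ*‖g‖^3/3*t^3 := by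
      intro t ht
      have := hmin (-(t • g))
      rw [hval t ht] at this
      rw [← hval l hl, ← hs_eq]
      exact this
    have key := key_real (‖g‖^2) (‖g‖^3) γ σ l f₀ (by positivity) (by positivity) hγ hσ hl H
    have hcoef : γ*l + σ*‖g‖*l^2 = 1 := by
      have h2' : ‖g‖^2 * (γ*l + σ*‖g‖*l^2) = ‖g‖^2 * 1 := by linear_combination key
      exact mul_left_cancel₀ (by positivity) h2'
    have hfin : g + γ • s + (σ * ‖s‖) • s = (1 - γ*l - σ*(l*‖g‖)*l) • g := by
      rw [hns, hs_eq]
      module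
    rw [hfin]
    have : (1 - γ*l - σ*(l*‖g‖)*l) = 0 := by linear_combination -hcoef
    rw [this, zero_smul]
  · intro s h
    have hc : 0 < γ + σ*‖s‖ := by positivity
    refine ⟨(γ + σ*‖s‖)⁻¹, inv_pos.mpr hc, ?_⟩
    rw [add_assoc] at h
    have hg' : g = -(γ • s + (σ*‖s‖) • s) := eq_neg_of_add_eq_zero_left h
    rw [hg', smul_neg, neg_neg, smul_add, smul_smul, smul_smul, ← add_smul]
    rw [show (γ + σ*‖s‖)⁻¹ * γ + (γ + σ*‖s‖)⁻¹ * (σ*‖s‖) = 1 by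
      field_simp]
    rw [one_smul]
end
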